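/- arXiv:2104.14768 — 3 statements merged into one kernel-verified Lean document; each statement's English description precedes it below -/
import Mathlib

section
/- Let G be a group of finite Prüfer rank with a finite normal subgroup D such that G/D is torsion-free abelian. Then G has a characteristic central torsion-free subgroup A of finite index. -/
open Subgroup

section Aux

variable {P : Type*} [Group P]

/-- Lifting a generating finset into the subgroup it generates (or any subgroup
containing it) gives a generating finset of the subtype group. -/
private lemma aux_closure_lift_top {C : Subgroup P} (t : Finset ↥C)
    (h : Subgroup.closure ((↑) '' (↑t : Set ↥C)) = C) :
    Subgroup.closure (↑t : Set ↥C) = ⊤ := by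
  apply Subgroup.map_injective C.subtype_injective
  rw [MonoidHom.map_closure, ← MonoidHom.range_eq_map, Subgroup.range_subtype]
  simpa [Subgroup.coe_subtype] using h

/-- Core counting lemma: a group generated by a finset `s`, in which all elements
commute and every element satisfies `x ^ n = 1`, is finite of cardinality at most
`n ^ s.card`. -/
private lemma aux_core_card (n : ℕ) (hn : 0 < n)
    (hc : ∀ x y : P, x * y = y * x) (s : Finset P)
    (hgen : Subgroup.closure (s : Set P) = ⊤)
    (hord : ∀ x : P, x ^ n = 1) :
    Finite P ∧ Nat.card P ≤ n ^ s.card := by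
  classical
  haveI : NeZero n := ⟨hn.ne'⟩
  letI : CommGroup P := { (inferInstance : Group P) with mul_comm := hc }
  let ψ : Multiplicative ({x // x ∈ s} → ZMod n) →* P :=
    MonoidHom.mk' (fun g => ∏ x : {x // x ∈ s}, (x : P) ^ ((Multiplicative.toAdd g) x).val)
      (by
        intro a b
        rw [← Finset.prod_mul_distrib]
        refine Finset.prod_congr rfl fun x _ => ?_
        have hx : ((x : P)) ^ n = 1 := hord _
        show (x : P) ^ ((Multiplicative.toAdd a x + Multiplicative.toAdd b x).val) = _
        rw [ZMod.val_add, ← pow_eq_pow_mod _ hx, pow_add])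
  have hsub : (s : Set P) ⊆ ψ.range := by
    intro x hx
    have hx' : x ∈ s := hx
    set g₀ : {y // y ∈ s} → ZMod n := Pi.single (⟨x, hx'⟩ : {y // y ∈ s}) (1 : ZMod n) with hg₀
    refine ⟨Multiplicative.ofAdd g₀, ?_⟩
    show (∏ y : {y // y ∈ s}, (y : P) ^ (g₀ y).val) = x
    rw [Fintype.prod_eq_single (⟨x, hx'⟩ : {y // y ∈ s})
        (fun y hy => by rw [hg₀, Pi.single_eq_of_ne hy, ZMod.val_zero, pow_zero])]
    rw [hg₀, Pi.single_eq_same, ← Nat.cast_one, ZMod.val_natCast, ← pow_eq_pow_mod _ (hord x), pow_one]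
  have hsurj : Function.Surjective ψ := by
    intro p
    have hp : p ∈ ψ.range := by
      have : Subgroup.closure (s : Set P) ≤ ψ.range := (Subgroup.closure_le _).mpr hsub
      rw [hgen] at this
      exact this (Subgroup.mem_top p)
    exact hp
  constructor
  · exact Finite.of_surjective ψ hsurj
  · calc Nat.card P ≤ Nat.card (Multiplicative ({x // x ∈ s} → ZMod n)) :=
          Nat.card_le_card_of_surjective ψ hsurj
      _ = Nat.card ({x // x ∈ s} → ZMod n) := Nat.card_congr Multiplicative.toAdd
      _ = n ^ s.card := by
          rw [Nat.card_fun, Nat.card_zmod, Nat.card_eq_fintype_card, Fintype.card_coe]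

/-- Wrapper: the subgroup generated by a finset whose closure is commutative, in a
group of exponent dividing `n`, is finite with cardinality at most `n ^ s.card`. -/
private lemma aux_closure_finite (n : ℕ) (hn : 0 < n) (hord : ∀ x : P, x ^ n = 1)
    (s : Finset P)
    (hcomm : ∀ x ∈ Subgroup.closure (s : Set P), ∀ y ∈ Subgroup.closure (s : Set P),
      x * y = y * x) :
    Finite ↥(Subgroup.closure (s : Set P)) ∧
      Nat.card ↥(Subgroup.closure (s : Set P)) ≤ n ^ s.card := by
  classical
  set H := Subgroup.closure (s : Set P) with hH
  have hsH : ∀ x ∈ s, x ∈ H := fun x hx => Subgroup.subset_closure hx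
  let t : Finset ↥H := s.attach.image fun x => (⟨x.1, hsH x.1 x.2⟩ : ↥H)
  have himg : ((↑) '' (↑t : Set ↥H)) = (s : Set P) := by
    ext g
    simp only [t, Finset.coe_image, Set.mem_image, Finset.mem_coe, Finset.mem_image,
      Finset.mem_attach, true_and]
    constructor
    · rintro ⟨y, ⟨x, rfl⟩, rfl⟩; exact x.2
    · intro hg; exact ⟨⟨g, hsH g hg⟩, ⟨⟨g, hg⟩, rfl⟩, rfl⟩
  have htop : Subgroup.closure (↑t : Set ↥H) = ⊤ := by
    apply aux_closure_lift_top
    rw [himg]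
  have hc : ∀ x y : ↥H, x * y = y * x := fun x y => Subtype.ext (hcomm _ x.2 _ y.2)
  have hordH : ∀ x : ↥H, x ^ n = 1 := fun x => Subtype.ext (by
    push_cast
    exact hord (x : P))
  obtain ⟨hfin, hcard⟩ := aux_core_card n hn hc t htop hordH
  refine ⟨hfin, hcard.trans (Nat.pow_le_pow_right hn ?_)⟩
  exact (Finset.card_image_le).trans (by simp)

/-- In a group in which all commutators are central: bilinearity identity. -/
private lemma aux_comm_mul_left (hcomm : ∀ u v : P, u * v * u⁻¹ * v⁻¹ ∈ Subgroup.center P)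
    (u v w : P) :
    (u * v) * w * (u * v)⁻¹ * w⁻¹ = (v * w * v⁻¹ * w⁻¹) * (u * w * u⁻¹ * w⁻¹) := by
  have hc : ∀ x : P, x * (v * w * v⁻¹ * w⁻¹) = (v * w * v⁻¹ * w⁻¹) * x := fun x =>
    Subgroup.mem_center_iff.mp (hcomm v w) x
  calc (u * v) * w * (u * v)⁻¹ * w⁻¹
      = u * (v * w * v⁻¹ * w⁻¹) * (w * u⁻¹ * w⁻¹) := by group
    _ = (v * w * v⁻¹ * w⁻¹) * u * (w * u⁻¹ * w⁻¹) := by rw [hc u]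
    _ = (v * w * v⁻¹ * w⁻¹) * (u * w * u⁻¹ * w⁻¹) := by group

private lemma aux_comm_inv_left (hcomm : ∀ u v : P, u * v * u⁻¹ * v⁻¹ ∈ Subgroup.center P)
    (u w : P) :
    u⁻¹ * w * u * w⁻¹ = (u * w * u⁻¹ * w⁻¹)⁻¹ := by
  have hc : ∀ x : P, x * (u * w * u⁻¹ * w⁻¹)⁻¹ = (u * w * u⁻¹ * w⁻¹)⁻¹ * x := fun x =>
    Subgroup.mem_center_iff.mp (inv_mem (hcomm u w)) x
  calc u⁻¹ * w * u * w⁻¹ = u⁻¹ * (u * w * u⁻¹ * w⁻¹)⁻¹ * u := by group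
    _ = (u * w * u⁻¹ * w⁻¹)⁻¹ * u⁻¹ * u := by rw [hc u⁻¹]
    _ = (u * w * u⁻¹ * w⁻¹)⁻¹ := by group

/-- Main bound: in a group where all commutators are central and `q ^ n = 1` for all `q`,
the subgroup generated by a finset `S` is finite of card at most `n ^ S.card * n ^ (S.card * S.card)`. -/
private lemma aux_bound (n : ℕ) (hn : 0 < n) (hexp : ∀ q : P, q ^ n = 1)
    (hcomm : ∀ u v : P, u * v * u⁻¹ * v⁻¹ ∈ Subgroup.center P) (S : Finset P) :
    Finite ↥(Subgroup.closure (S : Set P)) ∧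
      Nat.card ↥(Subgroup.closure (S : Set P)) ≤ n ^ S.card * n ^ (S.card * S.card) := by
  classical
  set H := Subgroup.closure (S : Set P) with hH
  set F : Finset P := (S ×ˢ S).image (fun p => p.1 * p.2 * p.1⁻¹ * p.2⁻¹) with hF
  set K := Subgroup.closure (F : Set P) with hK
  have hKcent : K ≤ Subgroup.center P := by
    rw [hK]
    refine (Subgroup.closure_le _).mpr ?_
    intro z hz
    simp only [hF, Finset.coe_image, Set.mem_image, Finset.mem_coe, Finset.mem_product] at hz
    obtain ⟨⟨a, b⟩, -, rfl⟩ := hz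
    exact hcomm a b
  obtain ⟨hKfin, hKcard⟩ := aux_closure_finite n hn hexp F
    (fun x hx y _ => (Subgroup.mem_center_iff.mp (hKcent hx) y).symm)
  have hFcard : F.card ≤ S.card * S.card :=
    (Finset.card_image_le).trans (by rw [Finset.card_product])
  have hKH : K ≤ H := by
    rw [hK]
    refine (Subgroup.closure_le _).mpr ?_
    intro z hz
    simp only [hF, Finset.coe_image, Set.mem_image, Finset.mem_coe, Finset.mem_product] at hz
    obtain ⟨⟨a, b⟩, ⟨ha, hb⟩, rfl⟩ := hz
    have haH : a ∈ H := Subgroup.subset_closure ha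
    have hbH : b ∈ H := Subgroup.subset_closure hb
    exact mul_mem (mul_mem (mul_mem haH hbH) (inv_mem haH)) (inv_mem hbH)
  -- all commutators of elements of H lie in K
  have hsymm : ∀ p q : P, p * q * p⁻¹ * q⁻¹ ∈ K → q * p * q⁻¹ * p⁻¹ ∈ K := by
    intro p q h
    have : q * p * q⁻¹ * p⁻¹ = (p * q * p⁻¹ * q⁻¹)⁻¹ := by group
    rw [this]; exact inv_mem h
  have h2 : ∀ u v : P, u ∈ H → v ∈ H → u * v * u⁻¹ * v⁻¹ ∈ K := by
    intro u v hu hv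
    refine Subgroup.closure_induction₂
      (p := fun x y _ _ => x * y * x⁻¹ * y⁻¹ ∈ K) ?_ ?_ ?_ ?_ ?_ ?_ ?_ hu hv
    · intro x y hx hy
      apply Subgroup.subset_closure
      exact Finset.mem_coe.mpr (Finset.mem_image.mpr ⟨(x, y), Finset.mem_product.mpr ⟨hx, hy⟩, rfl⟩)
    · intro x _; simpa using one_mem K
    · intro x _; simpa using one_mem K
    · intro x y z _ _ _ h1 h2'
      rw [aux_comm_mul_left hcomm]
      exact mul_mem h2' h1
    · intro y z x _ _ _ h1 h2'
      have : x * (y * z) * x⁻¹ * (y * z)⁻¹ = ((y * z) * x * (y * z)⁻¹ * x⁻¹)⁻¹ := by group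
      rw [this, aux_comm_mul_left hcomm]
      exact inv_mem (mul_mem (hsymm _ _ h2') (hsymm _ _ h1))
    · intro x y _ _ h
      have : x⁻¹ * y * x⁻¹⁻¹ * y⁻¹ = (x * y * x⁻¹ * y⁻¹)⁻¹ := by
        rw [inv_inv]; exact aux_comm_inv_left hcomm x y
      rw [this]; exact inv_mem h
    · intro x y _ _ h
      have hyx : y * x * y⁻¹ * x⁻¹ ∈ K := hsymm _ _ h
      have hyinv : y⁻¹ * x * y⁻¹⁻¹ * x⁻¹ ∈ K := by
        have : y⁻¹ * x * y⁻¹⁻¹ * x⁻¹ = (y * x * y⁻¹ * x⁻¹)⁻¹ := by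
          rw [inv_inv]; exact aux_comm_inv_left hcomm y x
        rw [this]; exact inv_mem hyx
      exact hsymm _ _ hyinv
  -- pass to the quotient of H by K
  set KH := K.subgroupOf H with hKH'
  haveI : KH.Normal := by
    constructor
    intro k hk g
    rw [Subgroup.mem_subgroupOf] at hk ⊢
    have : ((g * k * g⁻¹ : ↥H) : P) = (k : P) := by
      push_cast
      have h' := Subgroup.mem_center_iff.mp (hKcent hk) (g : P)
      rw [h']; group
    rw [this]; exact hk
  have hsH : ∀ x ∈ S, x ∈ H := fun x hx => Subgroup.subset_closure hx
  let t : Finset ↥H := S.attach.image fun x => (⟨x.1, hsH x.1 x.2⟩ : ↥H)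
  have himg : ((↑) '' (↑t : Set ↥H)) = (S : Set P) := by
    ext g
    simp only [t, Finset.coe_image, Set.mem_image, Finset.mem_coe, Finset.mem_image,
      Finset.mem_attach, true_and]
    constructor
    · rintro ⟨y, ⟨x, rfl⟩, rfl⟩; exact x.2
    · intro hg; exact ⟨⟨g, hsH g hg⟩, ⟨⟨g, hg⟩, rfl⟩, rfl⟩
  have htop : Subgroup.closure (↑t : Set ↥H) = ⊤ := by
    apply aux_closure_lift_top
    rw [himg]
  let π := QuotientGroup.mk' KH
  let u : Finset (↥H ⧸ KH) := t.image π
  have hutop : Subgroup.closure (↑u : Set (↥H ⧸ KH)) = ⊤ := by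
    rw [Finset.coe_image, ← MonoidHom.map_closure, htop, ← MonoidHom.range_eq_map]
    exact MonoidHom.range_eq_top_of_surjective π (QuotientGroup.mk'_surjective KH)
  have hcommQ : ∀ a b : ↥H ⧸ KH, a * b = b * a := by
    intro a b
    induction a using QuotientGroup.induction_on with
    | H x =>
      induction b using QuotientGroup.induction_on with
      | H y =>
        show QuotientGroup.mk (x * y) = QuotientGroup.mk (y * x)
        rw [QuotientGroup.eq]
        rw [Subgroup.mem_subgroupOf]
        have : (((x * y)⁻¹ * (y * x) : ↥H) : P)
            = (y : P)⁻¹ * (x : P)⁻¹ * ((y : P)⁻¹)⁻¹ * ((x : P)⁻¹)⁻¹ := by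
          push_cast; group
        rw [this]
        exact h2 _ _ (inv_mem y.2) (inv_mem x.2)
  have hexpQ : ∀ a : ↥H ⧸ KH, a ^ n = 1 := by
    intro a
    induction a using QuotientGroup.induction_on with
    | H x =>
      have hx : (x : ↥H) ^ n = 1 := Subtype.ext (by push_cast; exact hexp (x : P))
      show (QuotientGroup.mk x : ↥H ⧸ KH) ^ n = 1
      rw [← QuotientGroup.mk_pow, hx]
      rfl
  obtain ⟨hQfin, hQcard⟩ := aux_core_card n hn hcommQ u hutop hexpQ
  have hucard : u.card ≤ S.card :=
    (Finset.card_image_le).trans ((Finset.card_image_le).trans (by simp))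
  have hKHfin : Finite ↥KH := Finite.of_equiv _ (Subgroup.subgroupOfEquivOfLe hKH).symm.toEquiv
  have hKHcard : Nat.card ↥KH = Nat.card ↥K :=
    Nat.card_congr (Subgroup.subgroupOfEquivOfLe hKH).toEquiv
  haveI : Finite (↥H ⧸ KH) := hQfin
  have hHfin : Finite ↥H :=
    Finite.of_equiv _ (Subgroup.groupEquivQuotientProdSubgroup (s := KH)).symm
  refine ⟨hHfin, ?_⟩
  rw [Subgroup.card_eq_card_quotient_mul_card_subgroup KH]
  refine Nat.mul_le_mul ?_ ?_
  · exact hQcard.trans (Nat.pow_le_pow_right hn hucard)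
  · rw [hKHcard]
    exact hKcard.trans (Nat.pow_le_pow_right hn hFcard)

/-- A group of finite Prüfer rank, finite exponent, and all commutators central
is finite. -/
private lemma aux_L3 (m n : ℕ) (hn : 0 < n)
    (hrk : ∀ H : Subgroup P, H.FG →
      ∃ S : Finset P, S.card ≤ m ∧ Subgroup.closure (S : Set P) = H)
    (hexp : ∀ q : P, q ^ n = 1)
    (hcomm : ∀ u v : P, u * v * u⁻¹ * v⁻¹ ∈ Subgroup.center P) :
    Finite P := by
  by_contra hinf
  haveI hinf' : Infinite P := not_finite_iff_infinite.mp hinf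
  obtain ⟨t, -, htfin, htcard⟩ :=
    (Set.infinite_univ (α := P)).exists_subset_ncard_eq (n ^ m * n ^ (m * m) + 1)
  set tF := htfin.toFinset with htF
  obtain ⟨S, hScard, hSeq⟩ := hrk (Subgroup.closure (↑tF : Set P)) ⟨tF, rfl⟩
  obtain ⟨hfin, hcard⟩ := aux_bound n hn hexp hcomm S
  rw [hSeq] at hfin hcard
  have hle : Nat.card ↥(Subgroup.closure (↑tF : Set P)) ≤ n ^ m * n ^ (m * m) :=
    hcard.trans (Nat.mul_le_mul (Nat.pow_le_pow_right hn hScard)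
      (Nat.pow_le_pow_right hn (Nat.mul_le_mul hScard hScard)))
  have hsub : t ⊆ (Subgroup.closure (↑tF : Set P) : Set P) := by
    intro x hx
    exact Subgroup.subset_closure (by rwa [htF, Set.Finite.coe_toFinset])
  haveI := hfin
  have hfinset : (Subgroup.closure (↑tF : Set P) : Set P).Finite := Set.toFinite _
  have : t.ncard ≤ n ^ m * n ^ (m * m) := by
    calc t.ncard ≤ (Subgroup.closure (↑tF : Set P) : Set P).ncard :=
          Set.ncard_le_ncard hsub hfinset
      _ = Nat.card ↥(Subgroup.closure (↑tF : Set P)) :=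
          (Nat.card_coe_set_eq _).symm
      _ ≤ n ^ m * n ^ (m * m) := hle
  omega

/-- Rank transfer: finite Prüfer rank passes to quotients of subgroups. -/
private lemma aux_rank_transfer {m : ℕ}
    (hrank : ∀ H : Subgroup P, H.FG →
      ∃ S : Finset P, S.card ≤ m ∧ Subgroup.closure (S : Set P) = H)
    (C : Subgroup P) {Q : Type*} [Group Q] (f : ↥C →* Q) (hf : Function.Surjective f) :
    ∀ H : Subgroup Q, H.FG →
      ∃ S : Finset Q, S.card ≤ m ∧ Subgroup.closure (S : Set Q) = H := by
  classical
  rintro H ⟨u, hu⟩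
  choose g hg using hf
  let t : Finset ↥C := u.image g
  have hft : f '' (↑t : Set ↥C) = (u : Set Q) := by
    ext q
    simp only [t, Finset.coe_image, Set.mem_image, Finset.mem_coe]
    constructor
    · rintro ⟨a, ⟨b, hb, rfl⟩, rfl⟩; rw [hg b]; exact hb
    · intro hq; exact ⟨g q, ⟨q, hq, rfl⟩, hg q⟩
  let tG : Finset P := t.image (↑)
  obtain ⟨S, hScard, hSeq⟩ := hrank (Subgroup.closure (↑tG : Set P)) ⟨tG, rfl⟩
  have htGC : (↑tG : Set P) ⊆ (C : Set P) := by
    intro x hx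
    simp only [tG, Finset.coe_image, Set.mem_image, Finset.mem_coe] at hx
    obtain ⟨a, -, rfl⟩ := hx
    exact a.2
  have hSC : ∀ x ∈ S, x ∈ C := by
    intro x hx
    have : x ∈ Subgroup.closure (↑S : Set P) := Subgroup.subset_closure hx
    rw [hSeq] at this
    exact (Subgroup.closure_le C).mpr htGC this
  let S' : Finset ↥C := S.attach.image fun x => (⟨x.1, hSC x.1 x.2⟩ : ↥C)
  have hS'img : ((↑) '' (↑S' : Set ↥C)) = (S : Set P) := by
    ext g'
    simp only [S', Finset.coe_image, Set.mem_image, Finset.mem_coe, Finset.mem_image,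
      Finset.mem_attach, true_and]
    constructor
    · rintro ⟨y, ⟨x, rfl⟩, rfl⟩; exact x.2
    · intro hg'; exact ⟨⟨g', hSC g' hg'⟩, ⟨⟨g', hg'⟩, rfl⟩, rfl⟩
  have hclosure_eq : Subgroup.closure (↑S' : Set ↥C) = Subgroup.closure (↑t : Set ↥C) := by
    apply Subgroup.map_injective C.subtype_injective
    rw [MonoidHom.map_closure, MonoidHom.map_closure]
    simp only [Subgroup.coe_subtype]
    rw [hS'img, hSeq]
    congr 1
    rw [← Finset.coe_image]
  refine ⟨S'.image f, ?_, ?_⟩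
  · exact (Finset.card_image_le).trans ((Finset.card_image_le).trans (by simpa using hScard))
  · rw [Finset.coe_image, ← MonoidHom.map_closure, hclosure_eq, MonoidHom.map_closure, hft, hu]

end Aux

/-- A group of finite Prüfer rank with a finite normal subgroup `D` such that
`G/D` is torsion-free abelian has a characteristic central torsion-free
subgroup of finite index. -/
theorem exists_characteristic_central_torsionFree_finiteIndex
    {G : Type*} [Group G]
    (hrank : ∃ m : ℕ, ∀ H : Subgroup G, H.FG →
      ∃ S : Finset G, S.card ≤ m ∧ Subgroup.closure (S : Set G) = H)
    (D : Subgroup G) [D.Normal] (hDfin : Finite D)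
    (hab : ∀ x y : G ⧸ D, x * y = y * x)
    (htf : ∀ g : G ⧸ D, g ≠ 1 → ¬IsOfFinOrder g) :
    ∃ A : Subgroup G, A.Characteristic ∧ A ≤ Subgroup.center G ∧
      (∀ a ∈ A, a ≠ 1 → ∀ n : ℕ, 0 < n → a ^ n ≠ 1) ∧ A.FiniteIndex := by
  classical
  obtain ⟨m, hrank⟩ := hrank
  haveI := hDfin
  set n := Nat.card ↥D with hn'
  have hn : 0 < n := Nat.card_pos
  have hDpow : ∀ d ∈ D, d ^ n = 1 := by
    intro d hd
    have : (⟨d, hd⟩ : ↥D) ^ n = 1 := pow_card_eq_one'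
    have := congrArg (Subtype.val) this
    push_cast at this
    exact this
  have hcommD : ∀ g x : G, g * x * g⁻¹ * x⁻¹ ∈ D := by
    intro g x
    rw [← QuotientGroup.eq_one_iff]
    have : ((g * x * g⁻¹ * x⁻¹ : G) : G ⧸ D)
        = ((g : G ⧸ D)) * ((x : G ⧸ D)) * ((g : G ⧸ D))⁻¹ * ((x : G ⧸ D))⁻¹ := rfl
    rw [this, hab (g : G ⧸ D) (x : G ⧸ D)]
    group
  have htorsD : ∀ z : G, ∀ k : ℕ, 0 < k → z ^ k = 1 → z ∈ D := by
    intro z k hk hzk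
    rw [← QuotientGroup.eq_one_iff]
    by_contra h
    refine htf _ h (isOfFinOrder_iff_pow_eq_one.mpr ⟨k, hk, ?_⟩)
    rw [← QuotientGroup.mk_pow, hzk]
    rfl
  -- the centralizer of D has finite index
  set C := Subgroup.centralizer (D : Set G) with hC
  haveI : Finite (MulAut ↥D) :=
    Finite.of_injective (fun e => (e : ↥D → ↥D)) DFunLike.coe_injective
  have hCindex : C.index ≠ 0 := by
    set φ := MulAut.conjNormal (G := G) (H := D) with hφ
    have hker : φ.ker ≤ C := by
      intro x hx
      rw [Subgroup.mem_centralizer_iff]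
      intro h hh
      have h1 : φ x ⟨h, hh⟩ = ⟨h, hh⟩ := by
        rw [MonoidHom.mem_ker.mp hx]; rfl
      have h2 : x * h * x⁻¹ = h := by
        have := congrArg Subtype.val h1
        simpa [hφ, MulAut.conjNormal_apply] using this
      calc h * x = (x * h * x⁻¹) * x := by rw [h2]
        _ = x * h := by group
    have hkerindex : φ.ker.index ≠ 0 := by
      rw [Subgroup.index_ker]
      exact Nat.card_pos.ne'
    intro h0
    exact hkerindex (by
      have := Subgroup.index_dvd_of_le hker
      rw [h0] at this
      exact Nat.eq_zero_of_zero_dvd this)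
  -- n-th powers of elements of C are central
  have key : ∀ x ∈ C, x ^ n ∈ Subgroup.center G := by
    intro x hx
    rw [Subgroup.mem_center_iff]
    intro g
    have hd : g * x * g⁻¹ * x⁻¹ ∈ D := hcommD g x
    have hcom : Commute (g * x * g⁻¹ * x⁻¹) x :=
      Subgroup.mem_centralizer_iff.mp hx _ hd
    have h1 : g * x * g⁻¹ = (g * x * g⁻¹ * x⁻¹) * x := by group
    have h2 : g * x ^ n * g⁻¹ = (g * x * g⁻¹) ^ n := by
      induction n with
      | zero => simp
      | succ k ih =>
        rw [pow_succ, pow_succ, ← ih]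
        group
    have h3 : (g * x * g⁻¹) ^ n = x ^ n := by
      rw [h1, hcom.mul_pow, hDpow _ hd, one_mul]
    have h4 : g * x ^ n * g⁻¹ = x ^ n := by rw [h2, h3]
    calc g * x ^ n = (g * x ^ n * g⁻¹) * g := by group
      _ = x ^ n * g := by rw [h4]
  set Z := Subgroup.center G with hZ
  -- the quotient C / (Z ⊓ C) is finite
  set N := (Z ⊓ C).subgroupOf C with hN
  haveI : N.Normal := by
    constructor
    intro k hk g
    rw [Subgroup.mem_subgroupOf] at hk ⊢
    have hcentral : (k : G) ∈ Z := hk.1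
    have : ((g * k * g⁻¹ : ↥C) : G) = (k : G) := by
      push_cast
      have h' := Subgroup.mem_center_iff.mp hcentral (g : G)
      rw [h']; group
    rw [this]; exact hk
  have hexp1 : ∀ q : ↥C ⧸ N, q ^ n = 1 := by
    intro q
    induction q using QuotientGroup.induction_on with
    | H x =>
      show (QuotientGroup.mk x : ↥C ⧸ N) ^ n = 1
      rw [← QuotientGroup.mk_pow, QuotientGroup.eq_one_iff]
      rw [Subgroup.mem_subgroupOf]
      refine ⟨?_, ?_⟩
      · have : ((x ^ n : ↥C) : G) = (x : G) ^ n := by push_cast; rfl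
        rw [this]
        exact key (x : G) x.2
      · exact (x ^ n).2
  have hcomm1 : ∀ u v : ↥C ⧸ N, u * v * u⁻¹ * v⁻¹ ∈ Subgroup.center (↥C ⧸ N) := by
    intro u v
    induction u using QuotientGroup.induction_on with
    | H a =>
      induction v using QuotientGroup.induction_on with
      | H b =>
        rw [Subgroup.mem_center_iff]
        intro w
        induction w using QuotientGroup.induction_on with
        | H c =>
          have hcoe : ((a * b * a⁻¹ * b⁻¹ : ↥C) : G)
              = (a : G) * (b : G) * (a : G)⁻¹ * (b : G)⁻¹ := by push_cast; rfl
          have hdmem : ((a * b * a⁻¹ * b⁻¹ : ↥C) : G) ∈ D := by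
            rw [hcoe]; exact hcommD (a : G) (b : G)
          have hcc : (a * b * a⁻¹ * b⁻¹ : ↥C) * c = c * (a * b * a⁻¹ * b⁻¹) :=
            Subtype.ext (Subgroup.mem_centralizer_iff.mp c.2 _ hdmem)
          show QuotientGroup.mk c * (QuotientGroup.mk a * QuotientGroup.mk b *
              (QuotientGroup.mk a)⁻¹ * (QuotientGroup.mk b)⁻¹)
            = (QuotientGroup.mk a * QuotientGroup.mk b * (QuotientGroup.mk a)⁻¹ *
              (QuotientGroup.mk b)⁻¹) * QuotientGroup.mk c
          have e1 : (QuotientGroup.mk a * QuotientGroup.mk b * (QuotientGroup.mk a)⁻¹ *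
              (QuotientGroup.mk b)⁻¹ : ↥C ⧸ N) = QuotientGroup.mk (a * b * a⁻¹ * b⁻¹) := by
            rfl
          rw [e1]
          show QuotientGroup.mk (c * (a * b * a⁻¹ * b⁻¹)) =
            QuotientGroup.mk ((a * b * a⁻¹ * b⁻¹) * c)
          rw [← hcc]
  have hrk1 := aux_rank_transfer hrank C (QuotientGroup.mk' N) (QuotientGroup.mk'_surjective N)
  haveI : Finite (↥C ⧸ N) := aux_L3 m n hn hrk1 hexp1 hcomm1
  have hNindex : N.index ≠ 0 := by
    have : N.index = Nat.card (↥C ⧸ N) := rfl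
    rw [this]
    exact Nat.card_pos.ne'
  have hZCle : Z ⊓ C ≤ C := inf_le_right
  have hZCindex : (Z ⊓ C).index ≠ 0 := by
    rw [← Subgroup.relIndex_mul_index hZCle]
    exact Nat.mul_ne_zero hNindex hCindex
  have hZindex : Z.index ≠ 0 := by
    intro h0
    have := Subgroup.index_dvd_of_le (inf_le_left : Z ⊓ C ≤ Z)
    rw [h0] at this
    exact hZCindex (Nat.eq_zero_of_zero_dvd this)
  -- define A as the n-th powers of the center
  have hmul : ∀ a b : ↥Z, ((a * b : ↥Z) : G) ^ n = ((a : G)) ^ n * ((b : G)) ^ n := by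
    intro a b
    have hcom : Commute (a : G) (b : G) :=
      (Subgroup.mem_center_iff.mp a.2 (b : G)).symm
    push_cast
    exact hcom.mul_pow n
  set φA : ↥Z →* G := MonoidHom.mk' (fun z => (z : G) ^ n) hmul with hφA
  set A := φA.range with hA
  have hAmem : ∀ a : G, a ∈ A ↔ ∃ z ∈ Z, z ^ n = a := by
    intro a
    constructor
    · rintro ⟨z, rfl⟩; exact ⟨(z : G), z.2, rfl⟩
    · rintro ⟨z, hz, rfl⟩; exact ⟨⟨z, hz⟩, rfl⟩
  have hAle : A ≤ Z := by
    rintro a ⟨z, rfl⟩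
    exact pow_mem z.2 n
  refine ⟨A, ?_, hAle, ?_, ?_⟩
  · -- characteristic
    rw [Subgroup.characteristic_iff_le_comap]
    intro σ
    rintro a ⟨z, rfl⟩
    rw [Subgroup.mem_comap]
    have hσz : σ (z : G) ∈ Z := by
      rw [Subgroup.mem_center_iff]
      intro g
      have h1 : σ ((σ.symm g : G) * (z : G)) = g * σ (z : G) := by
        rw [map_mul, MulEquiv.apply_symm_apply]
      have h2 : σ ((z : G) * (σ.symm g : G)) = σ (z : G) * g := by
        rw [map_mul, MulEquiv.apply_symm_apply]
      have h3 : (σ.symm g : G) * (z : G) = (z : G) * (σ.symm g : G) :=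
        Subgroup.mem_center_iff.mp z.2 (σ.symm g)
      rw [← h1, ← h2, h3]
    rw [hAmem]
    refine ⟨σ (z : G), hσz, ?_⟩
    have : σ.toMonoidHom (φA z) = σ ((z : G) ^ n) := rfl
    rw [this, map_pow]
  · -- torsion-free
    rintro a ⟨z, rfl⟩ hne k hk hak
    have hzk : (z : G) ^ (n * k) = 1 := by
      rw [pow_mul]
      exact hak
    have hzD : (z : G) ∈ D := htorsD (z : G) (n * k) (Nat.mul_pos hn hk) hzk
    exact hne (hDpow _ hzD)
  · -- finite index
    set M := A.subgroupOf Z with hM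
    haveI : M.Normal := by
      constructor
      intro k hk g
      rw [Subgroup.mem_subgroupOf] at hk ⊢
      have : ((g * k * g⁻¹ : ↥Z) : G) = (k : G) := by
        push_cast
        have h' : (g : G) * (k : G) = (k : G) * (g : G) :=
          (Subgroup.mem_center_iff.mp g.2 (k : G)).symm
        rw [h']; group
      rw [this]; exact hk
    have hexp3 : ∀ q : ↥Z ⧸ M, q ^ n = 1 := by
      intro q
      induction q using QuotientGroup.induction_on with
      | H z =>
        show (QuotientGroup.mk z : ↥Z ⧸ M) ^ n = 1
        rw [← QuotientGroup.mk_pow, QuotientGroup.eq_one_iff]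
        rw [Subgroup.mem_subgroupOf]
        exact ⟨z, rfl⟩
    have hcommZ : ∀ a b : ↥Z, a * b = b * a := by
      intro a b
      exact Subtype.ext (Subgroup.mem_center_iff.mp b.2 (a : G))
    have hcomm3 : ∀ u v : ↥Z ⧸ M, u * v * u⁻¹ * v⁻¹ ∈ Subgroup.center (↥Z ⧸ M) := by
      intro u v
      induction u using QuotientGroup.induction_on with
      | H a =>
        induction v using QuotientGroup.induction_on with
        | H b =>
          have : (QuotientGroup.mk a * QuotientGroup.mk b * (QuotientGroup.mk a)⁻¹ *
              (QuotientGroup.mk b)⁻¹ : ↥Z ⧸ M) = 1 := by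
            show QuotientGroup.mk (a * b * a⁻¹ * b⁻¹) = (1 : ↥Z ⧸ M)
            rw [QuotientGroup.eq_one_iff]
            have : a * b * a⁻¹ * b⁻¹ = 1 := by
              rw [hcommZ a b]; group
            rw [this]
            exact one_mem M
          rw [this]
          exact one_mem _
    have hrk3 := aux_rank_transfer hrank Z (QuotientGroup.mk' M) (QuotientGroup.mk'_surjective M)
    haveI : Finite (↥Z ⧸ M) := aux_L3 m n hn hrk3 hexp3 hcomm3
    have hMindex : M.index ≠ 0 := by
      have : M.index = Nat.card (↥Z ⧸ M) := rfl
      rw [this]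
      exact Nat.card_pos.ne'
    refine ⟨?_⟩
    rw [← Subgroup.relIndex_mul_index hAle]
    exact Nat.mul_ne_zero hMindex hZindex
end

section
/- Let G be a group with finite derived subgroup G' of order dividing m, and let C = C_G(G'). Then every element of the subgroup B generated by m-th powers of elements of C is central in G, i.e. C^m ≤ Z(G). -/
/-- If `G'` is finite of order dividing `m` and `C = C_G(G')`, then the subgroup
generated by `m`-th powers of elements of `C` is contained in the centre of `G`. -/
theorem pow_centralizer_le_center {G : Type*} [Group G] (m : ℕ)
    (hfin : Finite (commutator G)) (hdvd : Nat.card (commutator G) ∣ m) :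
    Subgroup.closure
        {x : G | ∃ c ∈ Subgroup.centralizer (commutator G : Set G), x = c ^ m}
      ≤ Subgroup.center G := by
  rw [Subgroup.closure_le]
  rintro x ⟨c, hc, rfl⟩
  rw [SetLike.mem_coe, Subgroup.mem_center_iff]
  intro g
  open scoped commutatorElement in
  set k : G := ⁅c⁻¹, g⁆ with hkdef
  have hk : k ∈ commutator G :=
    Subgroup.commutator_mem_commutator (Subgroup.mem_top _) (Subgroup.mem_top _)
  have hcomm : Commute c k := (Subgroup.mem_centralizer_iff.mp hc k hk).symm
  have hk1 : k ^ m = 1 := by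
    obtain ⟨t, ht⟩ := hdvd
    have h2 : (⟨k, hk⟩ : commutator G) ^ m = 1 := by
      rw [ht, pow_mul, pow_card_eq_one', one_pow]
    have := congrArg Subtype.val h2
    simpa using this
  have h1 : c * k = g * c * g⁻¹ := by
    simp only [hkdef, commutatorElement_def, inv_inv]
    group
  have h3 : g * c ^ m * g⁻¹ = c ^ m := by
    calc g * c ^ m * g⁻¹ = (g * c * g⁻¹) ^ m := by
          rw [conj_pow]
      _ = (c * k) ^ m := by rw [h1]
      _ = c ^ m * k ^ m := hcomm.mul_pow m
      _ = c ^ m := by rw [hk1, mul_one]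
  calc g * c ^ m = (g * c ^ m * g⁻¹) * g := by group
    _ = c ^ m * g := by rw [h3]
end

section
/- Let G act on a torsion-free abelian group A of finite rank, and suppose the rational G-socle satisfies Soc_G(A ⊗ Q) = A ⊗ Q and A satisfies the maximal condition on G-invariant subgroups. Then Δ_G(A), the set of elements of A with finite G-orbit, is a finitely generated subgroup of A. -/
section Aux

variable (G : Type*) [Group G] {A : Type*} [AddCommGroup A] [DistribMulAction G A]

/-- The orbit set of a set under the `G`-action. -/
def gOrb (T : Set A) : Set A := {x | ∃ g : G, ∃ t ∈ T, x = g • t}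

/-- The `G`-invariant subgroup generated by `T`. -/
def gCl (T : Set A) : AddSubgroup A := AddSubgroup.closure (gOrb G T)

theorem subset_gCl (T : Set A) : T ⊆ (gCl G T : Set A) := by
  intro t ht
  exact AddSubgroup.subset_closure ⟨1, t, ht, (one_smul G t).symm⟩

theorem gCl_mono {T T' : Set A} (h : T ⊆ T') : gCl G T ≤ gCl G T' := by
  apply AddSubgroup.closure_mono
  rintro x ⟨g, t, ht, rfl⟩
  exact ⟨g, t, h ht, rfl⟩

theorem gCl_inv (T : Set A) : ∀ g : G, ∀ a ∈ gCl G T, g • a ∈ gCl G T := by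
  intro g a ha
  induction ha using AddSubgroup.closure_induction with
  | mem x hx =>
      obtain ⟨h, t, ht, rfl⟩ := hx
      rw [smul_smul]
      exact AddSubgroup.subset_closure ⟨g * h, t, ht, rfl⟩
  | zero => simpa [smul_zero] using (gCl G T).zero_mem
  | add x y _ _ hx hy => rw [smul_add]; exact (gCl G T).add_mem hx hy
  | neg x _ hx => rw [smul_neg]; exact (gCl G T).neg_mem hx

theorem gCl_le {T : Set A} {H : AddSubgroup A} (hT : T ⊆ (H : Set A))
    (hH : ∀ g : G, ∀ a ∈ H, g • a ∈ H) : gCl G T ≤ H := by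
  apply AddSubgroup.closure_le H |>.mpr
  rintro x ⟨g, t, ht, rfl⟩
  exact hH g t (hT ht)

/-- Iteratively insert picked elements. -/
def seqF {A : Type*} [DecidableEq A] (pick : Finset A → A) : ℕ → Finset A :=
  fun n => Nat.rec ∅ (fun _ F => insert (pick F) F) n

end Aux

/-- Let `G` act on a torsion-free abelian group `A` of finite rank. If the
rational `G`-socle of `A ⊗ ℚ` is all of `A ⊗ ℚ` and `A` satisfies the maximal
condition on `G`-invariant subgroups, then `Δ_G(A)`, the subgroup of elements
with finite `G`-orbit, is finitely generated. -/
theorem delta_fg_of_socle_and_max_condition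
    {G : Type*} [Group G] {A : Type*} [AddCommGroup A] [DistribMulAction G A]
    (htf : ∀ a : A, a ≠ 0 → ∀ n : ℕ, 0 < n → n • a ≠ 0)
    (hrank : ∃ m : ℕ, ∀ C : AddSubgroup A, C.FG →
      ∃ S : Finset A, S.card ≤ m ∧ AddSubgroup.closure (S : Set A) = C)
    -- `AQ` together with `ι` realizes `A ⊗ ℚ` as a `ℚG`-module:
    (AQ : Type*) [AddCommGroup AQ] [Module ℚ AQ]
    [DistribMulAction G AQ] [SMulCommClass G ℚ AQ]
    (ι : A →+ AQ) (hιinj : Function.Injective ι)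
    (hιequiv : ∀ g : G, ∀ a : A, ι (g • a) = g • ι a)
    (hdense : ∀ x : AQ, ∃ n : ℕ, 0 < n ∧ n • x ∈ Set.range ι)
    -- `Soc_G (A ⊗ ℚ) = A ⊗ ℚ`:
    (hsoc : sSup {W : Submodule ℚ AQ |
      (∀ g : G, ∀ w ∈ W, g • w ∈ W) ∧ W ≠ ⊥ ∧
      ∀ W' ≤ W, (∀ g : G, ∀ w ∈ W', g • w ∈ W') → W' = ⊥ ∨ W' = W} = ⊤)
    -- maximal condition on `G`-invariant subgroups:
    (hmax : ∀ f : ℕ →o AddSubgroup A,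
      (∀ n : ℕ, ∀ g : G, ∀ a ∈ f n, g • a ∈ f n) → ∃ n, ∀ m, n ≤ m → f m = f n)
    (Δ : AddSubgroup A)
    (hΔ : ∀ a : A, a ∈ Δ ↔ (Set.range fun g : G => g • a).Finite) :
    Δ.FG := by
  classical
  -- Δ is G-invariant
  have hΔinv : ∀ g : G, ∀ a ∈ Δ, g • a ∈ Δ := by
    intro g a ha
    rw [hΔ] at ha ⊢
    apply Set.Finite.subset ha
    rintro x ⟨h, rfl⟩
    exact ⟨h * g, by simp [mul_smul]⟩
  -- Step 1: Δ is finitely generated as a G-invariant subgroup.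
  have key : ∃ F : Finset A, ↑F ⊆ (Δ : Set A) ∧ gCl G (↑F) = Δ := by
    by_contra hcon
    push_neg at hcon
    -- pick function
    have hpick : ∀ F : Finset A, ↑F ⊆ (Δ : Set A) →
        ∃ x, x ∈ Δ ∧ x ∉ gCl G (↑F : Set A) := by
      intro F hF
      by_contra h
      push_neg at h
      apply hcon F hF
      apply le_antisymm
      · exact gCl_le G hF hΔinv
      · intro x hx; by_contra hx'; exact hx' (h x hx)
    set pick : Finset A → A := fun F =>
      if h : ∃ x, x ∈ Δ ∧ x ∉ gCl G (↑F : Set A) then h.choose else 0 with hpickdef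
    have hpick' : ∀ F : Finset A, ↑F ⊆ (Δ : Set A) →
        pick F ∈ Δ ∧ pick F ∉ gCl G (↑F : Set A) := by
      intro F hF
      have h := hpick F hF
      simp only [hpickdef, dif_pos h]
      exact h.choose_spec
    -- sequence of finsets
    set s : ℕ → Finset A := seqF pick with hsdef
    have hs0 : s 0 = ∅ := rfl
    have hssucc : ∀ n, s (n + 1) = insert (pick (s n)) (s n) := fun n => rfl
    have hsub : ∀ n, (s n : Set A) ⊆ (Δ : Set A) := by
      intro n
      induction n with
      | zero => simp [hs0]
      | succ k ih =>
          rw [hssucc k]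
          push_cast
          exact Set.insert_subset ((hpick' (s k) ih).1) ih
    have hmono : Monotone fun n => gCl G (↑(s n) : Set A) := by
      apply monotone_nat_of_le_succ
      intro n
      apply gCl_mono
      rw [hssucc n]; push_cast; exact Set.subset_insert _ _
    obtain ⟨n, hn⟩ := hmax ⟨fun n => gCl G (↑(s n) : Set A), hmono⟩
      (fun n => gCl_inv G _)
    have h1 : pick (s n) ∈ gCl G (↑(s (n + 1)) : Set A) := by
      apply subset_gCl
      rw [hssucc n]; exact Finset.mem_insert_self _ _
    have h2 := (hpick' (s n) (hsub n)).2
    rw [show gCl G (↑(s (n + 1)) : Set A) =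
        (⟨fun n => gCl G (↑(s n) : Set A), hmono⟩ : ℕ →o AddSubgroup A) (n + 1)
      from rfl, hn (n + 1) (Nat.le_succ n)] at h1
    exact h2 h1
  -- Step 2: the orbit set of a finite subset of Δ is finite, and generates Δ.
  obtain ⟨F, hFΔ, hFcl⟩ := key
  have horb : (gOrb G (↑F : Set A)).Finite := by
    have : gOrb G (↑F : Set A) =
        ⋃ t ∈ (↑F : Set A), Set.range fun g : G => g • t := by
      ext x
      simp only [gOrb, Set.mem_iUnion, Set.mem_range, Set.mem_setOf_eq]
      constructor
      · rintro ⟨g, t, ht, rfl⟩; exact ⟨t, ht, g, rfl⟩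
      · rintro ⟨t, ht, g, rfl⟩; exact ⟨g, t, ht, rfl⟩
    rw [this]
    exact Set.Finite.biUnion F.finite_toSet
      (fun t ht => (hΔ t).mp (hFΔ ht))
  rw [AddSubgroup.fg_iff]
  exact ⟨gOrb G (↑F : Set A), hFcl, horb⟩
end
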